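/- If f: ℝ^p → ℝ is continuously differentiable with M-Lipschitz gradient, e^{−f} is integrable, and π is the probability density proportional to e^{−f}, then ∫_{ℝ^p} ‖∇f(x)‖₂² π(x) dx ≤ M p. -/

import Mathlib

open MeasureTheory Set Filter
open scoped ENNReal NNReal Topology

section Auxiliary

variable {p : ℕ}
local notation "E" => EuclideanSpace ℝ (Fin p)

instance hausdorff_haar : (μH[(p:ℝ)] : Measure E).IsAddHaarMeasure := by
  set e := EuclideanSpace.equiv (Fin p) ℝ with he
  have hcard : ((Fintype.card (Fin p) : ℝ)) = (p:ℝ) := by simp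
  have hpi : (μH[(p:ℝ)] : Measure (Fin p → ℝ)) = volume := by
    rw [← hcard, hausdorffMeasure_pi_real]
  have hfin : IsFiniteMeasureOnCompacts (μH[(p:ℝ)] : Measure E) := by
    constructor
    intro K hK
    have h1 : K = (e.symm : (Fin p → ℝ) → E) '' ((e : E → (Fin p → ℝ)) '' K) := by
      rw [Set.image_image]; simp
    calc μH[(p:ℝ)] K = μH[(p:ℝ)] ((e.symm : (Fin p → ℝ) → E) '' ((e : E → (Fin p → ℝ)) '' K)) := by rw [← h1]
    _ ≤ (‖(e.symm : (Fin p → ℝ) →L[ℝ] E)‖₊ : ℝ≥0∞) ^ (p:ℝ) * μH[(p:ℝ)] ((e : E → (Fin p → ℝ)) '' K) :=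
        (e.symm : (Fin p → ℝ) →L[ℝ] E).lipschitz.hausdorffMeasure_image_le (by positivity) _
    _ < ⊤ := by
        rw [hpi]
        exact ENNReal.mul_lt_top (ENNReal.rpow_lt_top_of_nonneg (by positivity) ENNReal.coe_ne_top) (hK.image e.continuous).measure_lt_top
  have hopen : (μH[(p:ℝ)] : Measure E).IsOpenPosMeasure := by
    constructor
    intro U hU hne
    intro h0
    have h2 : μH[(p:ℝ)] ((e : E → (Fin p → ℝ)) '' U) ≤ (‖(e : EuclideanSpace ℝ (Fin p) →L[ℝ] (Fin p → ℝ))‖₊ : ℝ≥0∞) ^ (p:ℝ) * μH[(p:ℝ)] U :=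
      (e : EuclideanSpace ℝ (Fin p) →L[ℝ] (Fin p → ℝ)).lipschitz.hausdorffMeasure_image_le (by positivity) _
    rw [h0, mul_zero, hpi] at h2
    have h3 : IsOpen ((e : E → (Fin p → ℝ)) '' U) := e.toHomeomorph.isOpenMap _ hU
    exact (h3.measure_pos volume (hne.image _)).ne' (le_antisymm h2 zero_le)
  exact ⟨⟩

lemma vol_eq_smul_hausdorff :
    (volume : Measure E) = (volume : Measure E).addHaarScalarFactor μH[(p:ℝ)] • μH[(p:ℝ)] :=
  Measure.isAddLeftInvariant_eq_smul _ _

lemma vol_preimage_le {κ : ℝ≥0} {T : E → E} (hT : AntilipschitzWith κ T) (s : Set E) :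
    volume (T ⁻¹' s) ≤ (κ : ℝ≥0∞) ^ (p:ℝ) * volume s := by
  rw [vol_eq_smul_hausdorff]
  simp only [Measure.smul_apply, smul_eq_mul]
  calc _ ≤ (volume : Measure E).addHaarScalarFactor μH[(p:ℝ)] * ((κ : ℝ≥0∞) ^ (p:ℝ) * μH[(p:ℝ)] s) :=
        mul_le_mul_right (hT.hausdorffMeasure_preimage_le (by positivity) s) _
  _ = _ := by rw [mul_left_comm]; rfl

lemma grad_lipschitz {f : E → ℝ} {M : ℝ}
    (hlip : ∀ x y : E, ‖gradient f x - gradient f y‖ ≤ M * ‖x - y‖) :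
    LipschitzWith M.toNNReal (gradient f) := by
  apply LipschitzWith.of_dist_le_mul
  intro x y
  simp only [dist_eq_norm]
  refine le_trans (hlip x y) ?_
  gcongr
  exact Real.le_coe_toNNReal M

lemma descent {f : E → ℝ} (hf : ContDiff ℝ 1 f) {M : ℝ} (hM : 0 < M)
    (hlip : ∀ x y : E, ‖gradient f x - gradient f y‖ ≤ M * ‖x - y‖) (x v : E) :
    f (x + v) ≤ f x + inner ℝ (gradient f x) v + M / 2 * ‖v‖ ^ 2 := by
  set G := gradient f with hG
  have hdiff : ∀ y : E, DifferentiableAt ℝ f y := fun y => (hf.differentiable (by norm_num)).differentiableAt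
  have key : ∀ s : ℝ, HasDerivAt (fun s : ℝ => f (x + s • v))
      ((inner ℝ (G (x + s • v)) v : ℝ)) s := by
    intro s
    have h1 : HasDerivAt (fun s : ℝ => x + s • v) v s := by
      simpa using ((hasDerivAt_id s).smul_const v).const_add x
    have h2 := (hdiff (x + s • v)).hasGradientAt
    rw [hasGradientAt_iff_hasFDerivAt] at h2
    have h3 := h2.comp_hasDerivAt s h1
    simpa [hG, gradient, InnerProductSpace.toDual_symm_apply, Function.comp_def] using h3
  have hGcont : Continuous G := (grad_lipschitz hlip).continuous
  have hφcont : Continuous (fun s : ℝ => (inner ℝ (G (x + s • v)) v : ℝ)) := by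
    exact (hGcont.comp (by continuity)).inner continuous_const
  have ftc : f (x + v) - f x = ∫ s in (0:ℝ)..1, (inner ℝ (G (x + s • v)) v : ℝ) := by
    have := intervalIntegral.integral_eq_sub_of_hasDerivAt (f := fun s : ℝ => f (x + s • v))
      (fun s _ => key s) (hφcont.intervalIntegrable 0 1)
    simp only [one_smul, zero_smul, add_zero] at this
    rw [this]
  have hmono : ∫ s in (0:ℝ)..1, (inner ℝ (G (x + s • v)) v : ℝ)
      ≤ ∫ s in (0:ℝ)..1, ((inner ℝ (G x) v : ℝ) + M * ‖v‖ ^ 2 * s) := by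
    apply intervalIntegral.integral_mono_on zero_le_one (hφcont.intervalIntegrable 0 1)
    · exact (Continuous.intervalIntegrable (by continuity) 0 1)
    · intro s hs
      have h4 : (inner ℝ (G (x + s • v)) v : ℝ) - inner ℝ (G x) v = inner ℝ (G (x + s • v) - G x) v := by
        rw [inner_sub_left]
      have h5 : (inner ℝ (G (x + s • v) - G x) v : ℝ) ≤ ‖G (x + s • v) - G x‖ * ‖v‖ :=
        real_inner_le_norm _ _
      have h6 : ‖G (x + s • v) - G x‖ ≤ M * (s * ‖v‖) := by
        have := hlip (x + s • v) x
        simpa [norm_smul, abs_of_nonneg hs.1] using this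
      nlinarith [norm_nonneg v, norm_nonneg (G (x + s • v) - G x), hs.1, hs.2, hM.le]
  have hval : ∫ s in (0:ℝ)..1, ((inner ℝ (G x) v : ℝ) + M * ‖v‖ ^ 2 * s)
      = (inner ℝ (G x) v : ℝ) + M / 2 * ‖v‖ ^ 2 := by
    rw [intervalIntegral.integral_add (intervalIntegrable_const)
      ((by continuity : Continuous fun s : ℝ => M * ‖v‖ ^ 2 * s).intervalIntegrable 0 1)]
    rw [intervalIntegral.integral_const, intervalIntegral.integral_const_mul,
      integral_id]
    norm_num
    ring
  linarith [ftc, hmono, hval.le, hval.ge]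

lemma keyA {f : E → ℝ} (hf : ContDiff ℝ 1 f) {M : ℝ} (hM : 0 < M)
    (hlip : ∀ x y : E, ‖gradient f x - gradient f y‖ ≤ M * ‖x - y‖)
    (hint : Integrable (fun x : E => Real.exp (-f x)) volume)
    {t : ℝ} (ht0 : 0 < t) (ht1 : t * M < 1) :
    (∫⁻ x : E, ENNReal.ofReal (‖gradient f x‖ ^ 2 * Real.exp (-f x))) ≤
      ENNReal.ofReal ((((1 - t * M)⁻¹) ^ p - 1) / (t - M * t ^ 2 / 2)) *
        ∫⁻ x : E, ENNReal.ofReal (Real.exp (-f x)) := by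
  set G := gradient f with hG
  set c : ℝ := t - M * t ^ 2 / 2 with hc
  set T : E → E := fun x => x - t • G x with hT
  set Z' : ℝ≥0∞ := ∫⁻ x : E, ENNReal.ofReal (Real.exp (-f x)) with hZ'
  set I : ℝ≥0∞ := ∫⁻ x : E, ENNReal.ofReal (‖G x‖ ^ 2 * Real.exp (-f x)) with hI
  have hc0 : 0 < c := by
    rw [hc]
    have h9 : M * t ^ 2 < t := by
      have h10 : M * t ^ 2 = t * M * t := by ring
      rw [h10]
      calc t * M * t < 1 * t := mul_lt_mul_of_pos_right ht1 ht0
      _ = t := one_mul t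
    linarith
  have hfm : Measurable f := hf.continuous.measurable
  have hGcont : Continuous G := (grad_lipschitz hlip).continuous
  have hTmeas : Measurable T := (by fun_prop : Continuous fun x : E => x - t • G x).measurable
  have hW : Measurable fun x : E => ENNReal.ofReal (Real.exp (-f x)) :=
    (Real.measurable_exp.comp hfm.neg).ennreal_ofReal
  have hQ : Measurable fun x : E => ENNReal.ofReal (‖G x‖ ^ 2 * Real.exp (-f x)) :=
    (((hGcont.norm.measurable).pow_const 2).mul (Real.measurable_exp.comp hfm.neg)).ennreal_ofReal
  have hZfin : Z' ≠ ∞ := by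
    rw [hZ', ← ofReal_integral_eq_lintegral_ofReal hint
      (Eventually.of_forall fun x => (Real.exp_pos _).le)]
    exact ENNReal.ofReal_ne_top
  -- antilipschitz
  set κ : ℝ≥0 := ((1 - t * M)⁻¹).toNNReal with hκ
  have h1tM : 0 < 1 - t * M := by linarith
  have hκcoe : (κ : ℝ) = (1 - t * M)⁻¹ := Real.coe_toNNReal _ (by positivity)
  have hanti : AntilipschitzWith κ T := by
    rw [antilipschitzWith_iff_le_mul_dist]
    intro x y
    have h2 : ‖T x - T y‖ ≥ (1 - t * M) * ‖x - y‖ := by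
      have h3 : T x - T y = (x - y) - t • (G x - G y) := by
        simp only [hT, smul_sub]; abel
      have h5 : ‖t • (G x - G y)‖ ≤ t * (M * ‖x - y‖) := by
        rw [norm_smul, Real.norm_eq_abs, abs_of_pos ht0]
        exact mul_le_mul_of_nonneg_left (hlip x y) ht0.le
      rw [h3]
      nlinarith [norm_sub_norm_le (x - y) (t • (G x - G y))]
    simp only [dist_eq_norm, hκcoe]
    rw [inv_mul_eq_div, le_div_iff₀ h1tM]
    linarith [h2]
  -- measure bound
  have hle : Measure.map T volume ≤ ((κ : ℝ≥0∞) ^ (p : ℝ)) • volume := by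
    refine Measure.le_iff.2 fun s hs => ?_
    rw [Measure.map_apply hTmeas hs, Measure.smul_apply, smul_eq_mul]
    exact vol_preimage_le hanti s
  -- pointwise descent bound
  have hpt : ∀ x : E, (1 + c * ‖G x‖ ^ 2) * Real.exp (-f x) ≤ Real.exp (-f (T x)) := by
    intro x
    have hd := descent hf hM hlip x (-(t • G x))
    have he1 : x + -(t • G x) = T x := by simp [hT, sub_eq_add_neg]
    have he2 : (inner ℝ (G x) (-(t • G x)) : ℝ) = -(t * ‖G x‖ ^ 2) := by
      rw [inner_neg_right, real_inner_smul_right, real_inner_self_eq_norm_sq]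
    have he3 : ‖-(t • G x)‖ ^ 2 = t ^ 2 * ‖G x‖ ^ 2 := by
      rw [norm_neg, norm_smul, Real.norm_eq_abs, abs_of_pos ht0]; ring
    rw [he1, he2, he3] at hd
    have hfT : -f (T x) ≥ c * ‖G x‖ ^ 2 - f x := by rw [hc]; nlinarith
    calc (1 + c * ‖G x‖ ^ 2) * Real.exp (-f x)
        ≤ Real.exp (c * ‖G x‖ ^ 2) * Real.exp (-f x) := by
          have := Real.add_one_le_exp (c * ‖G x‖ ^ 2)
          have hep := Real.exp_pos (-f x)
          nlinarith
      _ = Real.exp (c * ‖G x‖ ^ 2 + -f x) := (Real.exp_add _ _).symm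
      _ ≤ Real.exp (-f (T x)) := Real.exp_le_exp.2 (by linarith)
  -- main chain
  have chain : Z' + ENNReal.ofReal c * I ≤ (κ : ℝ≥0∞) ^ (p : ℝ) * Z' := by
    have step1 : Z' + ENNReal.ofReal c * I
        = ∫⁻ x : E, ENNReal.ofReal ((1 + c * ‖G x‖ ^ 2) * Real.exp (-f x)) := by
      rw [hZ', hI, ← lintegral_const_mul _ hQ, ← lintegral_add_left hW]
      congr 1
      ext x
      rw [← ENNReal.ofReal_mul hc0.le, ← ENNReal.ofReal_add (Real.exp_pos _).le (by positivity)]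
      congr 1
      ring
    have step2 : (∫⁻ x : E, ENNReal.ofReal ((1 + c * ‖G x‖ ^ 2) * Real.exp (-f x)))
        ≤ ∫⁻ x : E, ENNReal.ofReal (Real.exp (-f (T x))) :=
      lintegral_mono fun x => ENNReal.ofReal_le_ofReal (hpt x)
    have step3 : (∫⁻ x : E, ENNReal.ofReal (Real.exp (-f (T x))))
        = ∫⁻ y : E, ENNReal.ofReal (Real.exp (-f y)) ∂(Measure.map T volume) :=
      (lintegral_map hW hTmeas).symm
    have step4 : (∫⁻ y : E, ENNReal.ofReal (Real.exp (-f y)) ∂(Measure.map T volume))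
        ≤ (κ : ℝ≥0∞) ^ (p : ℝ) * Z' := by
      refine le_trans (lintegral_mono' hle le_rfl) ?_
      rw [lintegral_smul_measure, smul_eq_mul]
    rw [step1]
    exact step2.trans (step3.le.trans step4)
  -- arithmetic conclusion
  set A : ℝ := ((1 - t * M)⁻¹) ^ p with hA
  have hA1 : 1 ≤ A := by
    rw [hA]
    apply one_le_pow₀
    rw [le_inv_comm₀ one_pos h1tM]
    nlinarith
  have hκA : (κ : ℝ≥0∞) ^ (p : ℝ) = ENNReal.ofReal A := by
    rw [ENNReal.rpow_natCast, hA, ENNReal.ofReal_pow (by positivity)]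
    rfl
  have step5 : ENNReal.ofReal c * I ≤ ENNReal.ofReal (A - 1) * Z' := by
    have h7 : (κ : ℝ≥0∞) ^ (p : ℝ) * Z' = Z' + ENNReal.ofReal (A - 1) * Z' := by
      rw [hκA]
      have : ENNReal.ofReal A = 1 + ENNReal.ofReal (A - 1) := by
        rw [← ENNReal.ofReal_one, ← ENNReal.ofReal_add zero_le_one (by linarith)]
        congr 1; ring
      rw [this, add_mul, one_mul]
    rw [h7] at chain
    exact (ENNReal.add_le_add_iff_left hZfin).mp chain
  have step6 : I ≤ ENNReal.ofReal ((A - 1) / c) * Z' := by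
    have hcne : ENNReal.ofReal c ≠ 0 := (ENNReal.ofReal_pos.2 hc0).ne'
    rw [← ENNReal.mul_le_mul_iff_right hcne ENNReal.ofReal_ne_top, ← mul_assoc,
      ← ENNReal.ofReal_mul hc0.le]
    have : c * ((A - 1) / c) = A - 1 := by field_simp
    rw [this]
    exact step5
  exact step6

lemma limitB {M : ℝ} (hM : 0 < M) (p : ℕ) :
    Tendsto (fun t : ℝ => (((1 - t * M)⁻¹) ^ p - 1) / (t - M * t ^ 2 / 2)) (𝓝[>] (0:ℝ))
      (𝓝 (M * p)) := by
  set F : ℝ → ℝ := fun t => ((1 - t * M)⁻¹) ^ p with hF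
  have hF0 : F 0 = 1 := by simp [hF]
  have hFd : HasDerivAt F (M * p) 0 := by
    have h1 : HasDerivAt (fun t : ℝ => 1 - t * M) (-M) 0 := by
      simpa using ((hasDerivAt_id (0:ℝ)).mul_const M).const_sub 1
    have h2 : HasDerivAt (fun t : ℝ => (1 - t * M)⁻¹) M 0 := by
      have := h1.inv (by norm_num)
      simpa [Pi.inv_def] using this
    have h3 := h2.pow p
    simp only [zero_mul, sub_zero, inv_one, one_pow, Pi.pow_def] at h3
    exact h3.congr_deriv (by ring)
  have h4 := hasDerivAt_iff_tendsto_slope.mp hFd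
  have h5 : Tendsto (slope F 0) (𝓝[>] (0:ℝ)) (𝓝 (M * p)) :=
    h4.mono_left (nhdsWithin_mono 0 (fun x hx => by simpa using (ne_of_gt hx)))
  have h6 : Tendsto (fun t : ℝ => (1 - M * t / 2)⁻¹) (𝓝[>] (0:ℝ)) (𝓝 1) := by
    have hco : ContinuousAt (fun t : ℝ => (1 - M * t / 2)⁻¹) 0 := by
      apply ContinuousAt.inv₀ (by fun_prop)
      norm_num
    have h9 : Tendsto (fun t : ℝ => (1 - M * t / 2)⁻¹) (𝓝[>] (0:ℝ)) (𝓝 ((1 - M * 0 / 2)⁻¹)) :=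
      hco.tendsto.mono_left nhdsWithin_le_nhds
    simpa using h9
  have h7 := h5.mul h6
  rw [mul_one] at h7
  apply h7.congr'
  filter_upwards [self_mem_nhdsWithin] with t ht
  have ht0 : (0:ℝ) < t := ht
  rw [slope_def_field, hF0]
  have h8 : t - M * t ^ 2 / 2 = t * (1 - M * t / 2) := by ring
  rw [h8, ← div_div, sub_zero, div_eq_mul_inv ((F t - 1)/t)]


end Auxiliary

/-- **Lemma.** If `f : ℝ^p → ℝ` is continuously differentiable with `M`-Lipschitz gradient,
`e^{−f}` is integrable, and `π` is the probability density proportional to `e^{−f}`,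
then `∫ ‖∇f(x)‖₂² π(x) dx ≤ M p`. -/
theorem integral_sq_norm_gradient_le
    {p : ℕ} (hp : 0 < p) (M : ℝ) (hM : 0 < M)
    (f : EuclideanSpace ℝ (Fin p) → ℝ) (hf : ContDiff ℝ 1 f)
    (hlip : ∀ x y : EuclideanSpace ℝ (Fin p),
      ‖gradient f x - gradient f y‖ ≤ M * ‖x - y‖)
    (hint : Integrable (fun x : EuclideanSpace ℝ (Fin p) => Real.exp (-f x)) volume)
    (π : Measure (EuclideanSpace ℝ (Fin p)))
    (hπ : π = volume.withDensity fun x =>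
      ENNReal.ofReal (Real.exp (-f x) / ∫ y : EuclideanSpace ℝ (Fin p), Real.exp (-f y))) :
    ∫ x, ‖gradient f x‖ ^ 2 ∂π ≤ M * p := by
  set G := gradient f with hG
  set Z : ℝ := ∫ y : EuclideanSpace ℝ (Fin p), Real.exp (-f y) with hZdef
  have hGcont : Continuous G := (grad_lipschitz hlip).continuous
  have hfm : Measurable f := hf.continuous.measurable
  have hexp_nonneg : ∀ x : EuclideanSpace ℝ (Fin p), (0:ℝ) ≤ Real.exp (-f x) := fun x => (Real.exp_pos _).le
  have hZpos : 0 < Z := by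
    rw [hZdef]
    rw [integral_pos_iff_support_of_nonneg_ae (Eventually.of_forall hexp_nonneg) hint]
    have hsupp : Function.support (fun x : EuclideanSpace ℝ (Fin p) => Real.exp (-f x)) = univ := by
      ext x; simp [Function.mem_support, (Real.exp_pos (-f x)).ne']
    rw [hsupp]
    exact isOpen_univ.measure_pos volume univ_nonempty
  have hZ' : (∫⁻ x : EuclideanSpace ℝ (Fin p), ENNReal.ofReal (Real.exp (-f x))) = ENNReal.ofReal Z := by
    rw [hZdef]
    exact (ofReal_integral_eq_lintegral_ofReal hint (Eventually.of_forall hexp_nonneg)).symm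
  set I : ℝ≥0∞ := ∫⁻ x : EuclideanSpace ℝ (Fin p), ENNReal.ofReal (‖G x‖ ^ 2 * Real.exp (-f x)) with hI
  have hQ : Measurable fun x : EuclideanSpace ℝ (Fin p) => ENNReal.ofReal (‖G x‖ ^ 2 * Real.exp (-f x)) :=
    (((hGcont.norm.measurable).pow_const 2).mul (Real.measurable_exp.comp hfm.neg)).ennreal_ofReal
  -- Step 1: I ≤ ofReal (M p) * ofReal Z
  have hIle : I ≤ ENNReal.ofReal (M * p) * ENNReal.ofReal Z := by
    have hlim : Tendsto
        (fun t : ℝ => ENNReal.ofReal ((((1 - t * M)⁻¹) ^ p - 1) / (t - M * t ^ 2 / 2)) *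
          ENNReal.ofReal Z) (𝓝[>] (0:ℝ))
        (𝓝 (ENNReal.ofReal (M * p) * ENNReal.ofReal Z)) := by
      exact ENNReal.Tendsto.mul_const (ENNReal.tendsto_ofReal (limitB hM p)) (Or.inr ENNReal.ofReal_ne_top)
    refine ge_of_tendsto hlim ?_
    have hmem : Set.Ioo (0:ℝ) (1/M) ∈ 𝓝[>] (0:ℝ) :=
      Ioo_mem_nhdsGT_of_mem ⟨le_rfl, by positivity⟩
    filter_upwards [hmem] with t ht
    have ht1 : t * M < 1 := by
      rw [← lt_div_iff₀ hM]
      exact ht.2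
    have := keyA hf hM hlip hint ht.1 ht1
    rw [← hZ']
    exact this
  -- Step 2: rewrite the integral over π
  rw [hπ]
  have hwm : Measurable fun x : EuclideanSpace ℝ (Fin p) => ENNReal.ofReal (Real.exp (-f x) / Z) :=
    ((Real.measurable_exp.comp hfm.neg).div_const Z).ennreal_ofReal
  have hgm : Measurable fun x : EuclideanSpace ℝ (Fin p) => ENNReal.ofReal (‖G x‖ ^ 2) :=
    ((hGcont.norm.measurable).pow_const 2).ennreal_ofReal
  rw [integral_eq_lintegral_of_nonneg_ae (f := fun x => ‖G x‖ ^ 2) (Eventually.of_forall fun x => by positivity)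
    ((hGcont.norm.pow 2 : Continuous fun x => ‖G x‖ ^ 2).aestronglyMeasurable)]
  rw [lintegral_withDensity_eq_lintegral_mul volume hwm hgm]
  have hptw : ∀ x : EuclideanSpace ℝ (Fin p), (ENNReal.ofReal (Real.exp (-f x) / Z) * ENNReal.ofReal (‖G x‖ ^ 2))
      = ENNReal.ofReal Z⁻¹ * ENNReal.ofReal (‖G x‖ ^ 2 * Real.exp (-f x)) := by
    intro x
    rw [← ENNReal.ofReal_mul (by positivity), ← ENNReal.ofReal_mul (by positivity)]
    congr 1
    field_simp
  have hrw : (∫⁻ x : EuclideanSpace ℝ (Fin p), (fun x => ENNReal.ofReal (Real.exp (-f x) / Z)) x *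
      (fun x => ENNReal.ofReal (‖G x‖ ^ 2)) x)
      = ENNReal.ofReal Z⁻¹ * I := by
    rw [hI, ← lintegral_const_mul _ hQ]
    exact lintegral_congr hptw
  have hbound : (∫⁻ x : EuclideanSpace ℝ (Fin p), (fun x => ENNReal.ofReal (Real.exp (-f x) / Z)) x *
      (fun x => ENNReal.ofReal (‖G x‖ ^ 2)) x) ≤ ENNReal.ofReal (M * p) := by
    rw [hrw]
    calc ENNReal.ofReal Z⁻¹ * I
        ≤ ENNReal.ofReal Z⁻¹ * (ENNReal.ofReal (M * p) * ENNReal.ofReal Z) :=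
          mul_le_mul_right hIle _
      _ = ENNReal.ofReal (Z⁻¹ * (M * p * Z)) := by
          rw [← ENNReal.ofReal_mul (by positivity), ← ENNReal.ofReal_mul (by positivity)]
      _ = ENNReal.ofReal (M * p) := by
          congr 1
          field_simp
  calc (∫⁻ x : EuclideanSpace ℝ (Fin p), (fun x => ENNReal.ofReal (Real.exp (-f x) / Z)) x *
        (fun x => ENNReal.ofReal (‖G x‖ ^ 2)) x).toReal
      ≤ (ENNReal.ofReal (M * p)).toReal := ENNReal.toReal_mono ENNReal.ofReal_ne_top hbound
    _ = M * p := ENNReal.toReal_ofReal (by positivity)
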